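/- Let C_{k,l} ∈ ℂ^{n_k × n_k} for k, l = 1,…,m, and let Δ be their operator determinant. Define, for each k and each pair of indices i_k, j_k ∈ {1,…,n_k}, the matrix G_k(i_k, j_k) = D_{k,m}([C_{k,1}(i_k,j_k), C_{k,2}(i_k,j_k), …, C_{k,m}(i_k,j_k)]) ∈ ℂ^{C(m,k−1) × C(m,k)}. Then Δ((i_1,…,i_m),(j_1,…,j_m)) = G_1(i_1,j_1) · G_2(i_2,j_2) · ⋯ · G_m(i_m,j_m) for all multi-indices; in other words, Δ admits a representation as a TT-operator whose k-th internal rank is at most the binomial coefficient C(m,k). -/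

import Mathlib

open Matrix

/-- The operator determinant `|C k l|_⊗` of an `m × m` array of matrices
`C k l : Matrix (Fin (n k)) (Fin (n k)) ℂ`: the matrix
`∑ σ, sgn σ • C 0 (σ 0) ⊗ C 1 (σ 1) ⊗ ⋯ ⊗ C (m-1) (σ (m-1))`, realized on
multi-indices, so that the `m`-fold Kronecker product has entries
`∏ k, C k (σ k) (i k) (j k)`. -/
noncomputable def opDet (m : ℕ) (n : Fin m → ℕ)
    (C : (k : Fin m) → Fin m → Matrix (Fin (n k)) (Fin (n k)) ℂ) :
    Matrix ((k : Fin m) → Fin (n k)) ((k : Fin m) → Fin (n k)) ℂ :=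
  ∑ σ : Equiv.Perm (Fin m), (Equiv.Perm.sign σ : ℤ) •
    Matrix.of fun i j => ∏ k, C k (σ k) (i k) (j k)

/-- The matrices `D_{k,n}(a) ∈ ℂ^{C(n,k-1) × C(n,k)}` of Jurkat–Ryser, defined
recursively: `D_{1,n}(a)` is the row vector `[a 1, …, a n]`; `D_{n,n}(a)` is the column
vector `[a n, -a (n-1), …, (-1)^(n-1) • a 1]ᵀ`; and for `2 ≤ k ≤ n - 1`,
`D_{k,n}(a)` is the block matrix
`[[D_{k-1,n-1}(a 2, …, a n), 0], [(-1)^(k-1) a 1 • I, D_{k,n-1}(a 2, …, a n)]]`.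
(Values outside `1 ≤ k ≤ n` are junk.) -/
noncomputable def D : (n : ℕ) → (k : ℕ) → (Fin n → ℂ) →
    Matrix (Fin (n.choose (k - 1))) (Fin (n.choose k)) ℂ
  | 0, _, _ => 0
  | _ + 1, 0, _ => 0
  | n + 1, 1, a =>
      Matrix.of fun _ (j : Fin ((n + 1).choose 1)) =>
        a (Fin.cast (Nat.choose_one_right (n + 1)) j)
  | n + 1, k + 2, a =>
      if h : k + 2 = n + 1 then
        Matrix.of fun (i : Fin ((n + 1).choose (k + 1))) _ =>
          (-1 : ℂ) ^ (i : ℕ) *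
            a (Fin.rev (Fin.cast
              (show (n + 1).choose (k + 1) = n + 1 by
                have hkn : k + 1 = n := by omega
                rw [hkn]; exact Nat.choose_succ_self_right n) i))
      else if h2 : k + 2 ≤ n then
        Matrix.reindex
          (finSumFinEquiv.trans (finCongr (Nat.choose_succ_succ n k).symm))
          (finSumFinEquiv.trans (finCongr (Nat.choose_succ_succ n (k + 1)).symm))
          (Matrix.fromBlocks
            (D n (k + 1) (a ∘ Fin.succ))
            (0 : Matrix (Fin (n.choose k)) (Fin (n.choose (k + 2))) ℂ)
            (((-1 : ℂ) ^ (k + 1) * a 0) •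
              (1 : Matrix (Fin (n.choose (k + 1))) (Fin (n.choose (k + 1))) ℂ))
            (D n (k + 2) (a ∘ Fin.succ)))
      else 0

/-- The chain product `D_{1,n}(v 0) * D_{2,n}(v 1) * ⋯ * D_{k,n}(v (k-1))`, a
`C(n,0) × C(n,k)` matrix. -/
noncomputable def DChain (n : ℕ) (v : ℕ → Fin n → ℂ) :
    (k : ℕ) → Matrix (Fin (n.choose 0)) (Fin (n.choose k)) ℂ
  | 0 => 1
  | k + 1 => DChain n v k *
      Matrix.reindex (finCongr (congrArg n.choose (Nat.succ_sub_one k))) (Equiv.refl _)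
        (D n (k + 1) (v k))

noncomputable def D' (n : ℕ) (k : ℕ) (a : Fin n → ℂ) :
    Matrix (Fin (n.choose k)) (Fin (n.choose (k + 1))) ℂ :=
  Matrix.reindex (finCongr (congrArg n.choose (Nat.succ_sub_one k))) (Equiv.refl _)
    (D n (k + 1) a)

lemma D'_zero_apply (n : ℕ) (a : Fin (n+1) → ℂ) (i : Fin ((n+1).choose 0))
    (j : Fin ((n+1).choose 1)) :
    D' (n+1) 0 a i j = a ⟨j, by
      have h2 : (n+1).choose 1 = n+1 := Nat.choose_one_right _
      have := j.isLt; omega⟩ := by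
  show D (n+1) 1 a _ j = _
  rw [D]
  show a (Fin.cast _ j) = _
  congr 1

lemma D'_self_apply (n : ℕ) (h : (n+1).choose n = n + 1) (a : Fin (n+1) → ℂ)
    (i : Fin ((n+1).choose n)) (j : Fin ((n+1).choose (n+1))) :
    D' (n+1) n a i j = (-1 : ℂ)^(i:ℕ) * a (Fin.rev (Fin.cast h i)) := by
  cases n with
  | zero =>
      rw [D'_zero_apply]
      have hi : (i : ℕ) = 0 := by omega
      have hj : (j : ℕ) = 0 := by
        have h2 : (0+1).choose (0+1) = 1 := rfl
        have := j.isLt; omega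
      rw [hi]
      norm_num
      congr 1
      apply Fin.ext
      simp [Fin.rev, hi, hj]
  | succ m =>
      show D (m+2) (m+2) a (Fin.cast rfl i) j = _
      rw [D, dif_pos rfl]
      show (-1 : ℂ)^((Fin.cast _ i : Fin _) : ℕ) * a _ = _
      congr 2

lemma D'_succ_block (n k : ℕ) (hk : k + 2 ≤ n + 1) (a : Fin (n+1) → ℂ) :
    D' (n+1) (k+1) a =
      (Matrix.fromBlocks (D' n k (a ∘ Fin.succ)) 0
        (((-1:ℂ)^(k+1) * a 0) • (1 : Matrix (Fin (n.choose (k+1))) (Fin (n.choose (k+1))) ℂ))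
        (D' n (k+1) (a ∘ Fin.succ))).submatrix
        (⇑((finCongr (Nat.choose_succ_succ n k :
            (n+1).choose (k+1) = n.choose k + n.choose (k+1))).trans finSumFinEquiv.symm))
        (⇑((finCongr (Nat.choose_succ_succ n (k+1) :
            (n+1).choose (k+1+1) = n.choose (k+1) + n.choose (k+1+1))).trans
          finSumFinEquiv.symm)) := by
  by_cases h : k + 2 = n + 1
  · have hn : n = k + 1 := by omega
    subst hn
    ext i j
    rw [D'_self_apply (k+1) (Nat.choose_succ_self_right (k+1)) a i j, Matrix.submatrix_apply]
    have hcs : (k+1).choose k = k + 1 := Nat.choose_succ_self_right k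
    have hc1 : (k+1).choose (k+1) = 1 := Nat.choose_self _
    have hc1' : (k+1).choose k.succ = 1 := hc1
    have hc0 : (k+1).choose (k+2) = 0 := Nat.choose_eq_zero_of_lt (by omega)
    have hc0' : (k+1).choose (k+1).succ = 0 := hc0
    have hA : (k+1+1).choose (k+1) = k+2 := Nat.choose_succ_self_right (k+1)
    rcases hx : ((finCongr (Nat.choose_succ_succ (k+1) k :
          (k+1+1).choose (k+1) = (k+1).choose k + (k+1).choose (k+1))).trans
          finSumFinEquiv.symm) i with i1 | i2 <;>
      rcases hy : ((finCongr (Nat.choose_succ_succ (k+1) (k+1) :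
          (k+1+1).choose (k+1+1) = (k+1).choose (k+1) + (k+1).choose (k+1+1))).trans
          finSumFinEquiv.symm) j with j1 | j2
    · have hiv : (i : ℕ) = (i1 : ℕ) := by
        have h2 : i = ((finCongr (Nat.choose_succ_succ (k+1) k :
            (k+1+1).choose (k+1) = (k+1).choose k + (k+1).choose (k+1))).trans
            finSumFinEquiv.symm).symm (Sum.inl i1) := by rw [← hx, Equiv.symm_apply_apply]
        rw [h2]
        simp only [Equiv.symm_trans_apply, Equiv.symm_symm, finCongr_symm, finCongr_apply,
          finSumFinEquiv_apply_left, Fin.coe_cast, Fin.coe_castAdd]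
      rw [Matrix.fromBlocks_apply₁₁,
        D'_self_apply k (Nat.choose_succ_self_right k) (a ∘ Fin.succ) i1 j1, hiv]
      congr 1
      simp only [Function.comp_apply]
      congr 1
      apply Fin.ext
      have hi1 : (i1 : ℕ) < k + 1 := by have := i1.isLt; omega
      simp [Fin.rev, Fin.val_succ]
      omega
    · exact absurd j2.isLt (by omega)
    · have hiv : (i : ℕ) = (k+1).choose k + (i2 : ℕ) := by
        have h2 : i = ((finCongr (Nat.choose_succ_succ (k+1) k :
            (k+1+1).choose (k+1) = (k+1).choose k + (k+1).choose (k+1))).trans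
            finSumFinEquiv.symm).symm (Sum.inr i2) := by rw [← hx, Equiv.symm_apply_apply]
        rw [h2]
        simp only [Equiv.symm_trans_apply, Equiv.symm_symm, finCongr_symm, finCongr_apply,
          finSumFinEquiv_apply_right, Fin.coe_cast, Fin.coe_natAdd]
      have hi2 : (i2 : ℕ) = 0 := by have := i2.isLt; omega
      have hij : i2 = j1 := by
        apply Fin.ext
        have := j1.isLt; omega
      rw [Matrix.fromBlocks_apply₂₁, hij, Matrix.smul_apply, Matrix.one_apply_eq, smul_eq_mul,
        mul_one]
      congr 1
      · rw [hiv, hcs, hi2]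
      · congr 1
        apply Fin.ext
        simp [Fin.rev]
        omega
    · exact absurd j2.isLt (by omega)
  · have h2 : k + 2 ≤ n := by omega
    show D (n+1) (k+2) a = _
    rw [D, dif_neg h, dif_pos h2]
    rfl

lemma DChain_succ (n : ℕ) (v : ℕ → Fin n → ℂ) (k : ℕ) :
    DChain n v (k + 1) = DChain n v k * D' n k (v k) := by
  rw [DChain, D']

lemma DChain_congr (n : ℕ) (v v' : ℕ → Fin n → ℂ) (k : ℕ)
    (h : ∀ u < k, v u = v' u) : DChain n v k = DChain n v' k := by
  induction k with
  | zero => rfl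
  | succ k ih =>
      rw [DChain_succ, DChain_succ, ih (fun u hu => h u (by omega)), h k (by omega)]

def skipf (s u : ℕ) : ℕ := if u < s then u else u + 1

lemma DChain_aug (n : ℕ) (v : ℕ → Fin (n+1) → ℂ) (k : ℕ) (hk : k + 1 ≤ n + 1) :
    DChain (n+1) v (k+1) =
      (Matrix.fromCols
        (∑ s ∈ Finset.range (k+1), ((-1:ℂ)^s * v s 0) •
          DChain n (fun u => v (skipf s u) ∘ Fin.succ) k)
        (DChain n (fun u => v u ∘ Fin.succ) (k+1))).submatrix
        (Fin.cast ((Nat.choose_zero_right (n+1)).trans (Nat.choose_zero_right n).symm))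
        (⇑((finCongr (Nat.choose_succ_succ n k :
            (n+1).choose (k+1) = n.choose k + n.choose (k+1))).trans finSumFinEquiv.symm)) := by
  induction k with
  | zero =>
      rw [DChain_succ, DChain]
      rw [Matrix.one_mul]
      ext i j
      rw [D'_zero_apply, Matrix.submatrix_apply]
      rcases hy : ((finCongr (Nat.choose_succ_succ n 0 :
          (n+1).choose (0+1) = n.choose 0 + n.choose (0+1))).trans finSumFinEquiv.symm) j
          with j1 | j2
      · have hjv : (j : ℕ) = (j1 : ℕ) := by
          have h2 : j = ((finCongr (Nat.choose_succ_succ n 0 :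
              (n+1).choose (0+1) = n.choose 0 + n.choose (0+1))).trans
              finSumFinEquiv.symm).symm (Sum.inl j1) := by rw [← hy, Equiv.symm_apply_apply]
          rw [h2]
          simp only [Equiv.symm_trans_apply, Equiv.symm_symm, finCongr_symm, finCongr_apply,
            finSumFinEquiv_apply_left, Fin.coe_cast, Fin.coe_castAdd]
        rw [Matrix.fromCols_apply_inl, Finset.sum_range_one]
        show _ = (((-1:ℂ)^0 * v 0 0) • (1 : Matrix (Fin (n.choose 0)) (Fin (n.choose 0)) ℂ)) _ j1
        have h0 : n.choose 0 = 1 := Nat.choose_zero_right n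
        have hij : Fin.cast ((Nat.choose_zero_right (n+1)).trans (Nat.choose_zero_right n).symm)
            i = j1 := by
          apply Fin.ext
          have := i.isLt; have := j1.isLt
          have h00 : (n+1).choose 0 = 1 := rfl
          omega
        rw [hij, Matrix.smul_apply, Matrix.one_apply_eq, smul_eq_mul, mul_one, pow_zero, one_mul]
        congr 1
        apply Fin.ext
        have := j1.isLt
        simp
        omega
      · have hjv : (j : ℕ) = n.choose 0 + (j2 : ℕ) := by
          have h2 : j = ((finCongr (Nat.choose_succ_succ n 0 :
              (n+1).choose (0+1) = n.choose 0 + n.choose (0+1))).trans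
              finSumFinEquiv.symm).symm (Sum.inr j2) := by rw [← hy, Equiv.symm_apply_apply]
          rw [h2]
          simp only [Equiv.symm_trans_apply, Equiv.symm_symm, finCongr_symm, finCongr_apply,
            finSumFinEquiv_apply_right, Fin.coe_cast, Fin.coe_natAdd]
        rw [Matrix.fromCols_apply_inr]
        cases n with
        | zero => exact absurd j2.isLt (by have h1 : Nat.choose 0 (Nat.succ 0) = 0 := rfl; omega)
        | succ m =>
            rw [DChain_succ, DChain, Matrix.one_mul, D'_zero_apply]
            congr 1
            apply Fin.ext
            have h0 : (m+1).choose 0 = 1 := Nat.choose_zero_right _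
            simp [Fin.val_succ]
            omega
  | succ k ih =>
      rw [DChain_succ, ih (by omega), D'_succ_block n k hk (v (k+1)),
        Matrix.submatrix_mul_equiv, Matrix.fromCols_mul_fromBlocks]
      have e1 : (∑ s ∈ Finset.range (k+1), ((-1:ℂ)^s * v s 0) •
            DChain n (fun u => v (skipf s u) ∘ Fin.succ) k) * D' n k (v (k+1) ∘ Fin.succ) +
          DChain n (fun u => v u ∘ Fin.succ) (k+1) * (((-1:ℂ)^(k+1) * v (k+1) 0) •
            (1 : Matrix (Fin (n.choose (k+1))) (Fin (n.choose (k+1))) ℂ)) =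
          ∑ s ∈ Finset.range (k+1+1), ((-1:ℂ)^s * v s 0) •
            DChain n (fun u => v (skipf s u) ∘ Fin.succ) (k+1) := by
        conv_rhs => rw [Finset.sum_range_succ]
        rw [Matrix.sum_mul]
        congr 1
        · refine Finset.sum_congr rfl fun s hs => ?_
          rw [Finset.mem_range] at hs
          rw [Matrix.smul_mul]
          congr 1
          rw [DChain_succ]
          congr 1
          have hsk : skipf s k = k + 1 := if_neg (by omega)
          show D' n k (v (k+1) ∘ Fin.succ) = D' n k (v (skipf s k) ∘ Fin.succ)
          rw [hsk]
        · rw [Matrix.mul_smul, Matrix.mul_one]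
          congr 1
          refine DChain_congr n _ _ (k+1) fun u hu => ?_
          have hsk : skipf (k+1) u = u := if_pos (by omega)
          show v u ∘ Fin.succ = v (skipf (k+1) u) ∘ Fin.succ
          rw [hsk]
      have e2 : (∑ s ∈ Finset.range (k+1), ((-1:ℂ)^s * v s 0) •
            DChain n (fun u => v (skipf s u) ∘ Fin.succ) k) *
            (0 : Matrix (Fin (n.choose k)) (Fin (n.choose (k+1+1))) ℂ) +
          DChain n (fun u => v u ∘ Fin.succ) (k+1) * D' n (k+1) (v (k+1) ∘ Fin.succ) =
          DChain n (fun u => v u ∘ Fin.succ) (k+1+1) := by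
        rw [Matrix.mul_zero, zero_add, ← DChain_succ]
      rw [e1, e2]

lemma val_succAbove {n : ℕ} (s : Fin (n+1)) (k : Fin n) :
    ((s.succAbove k : Fin (n+1)) : ℕ) = skipf (s : ℕ) (k : ℕ) := by
  rw [Fin.succAbove, skipf]
  by_cases h : (k : ℕ) < (s : ℕ)
  · rw [if_pos (by simpa [Fin.lt_def] using h), if_pos h]
    rfl
  · rw [if_neg (by simpa [Fin.lt_def] using h), if_neg h]
    rfl

lemma DChain_det (n : ℕ) : ∀ (v : ℕ → Fin n → ℂ) (p : Fin (n.choose 0)) (q : Fin (n.choose n)),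
    DChain n v n p q = (Matrix.of fun k l : Fin n => v (↑k) l).det := by
  induction n with
  | zero =>
      intro v p q
      have hpq : p = q := by
        apply Fin.ext
        have h1 : Nat.choose 0 0 = 1 := rfl
        have := p.isLt; have := q.isLt; omega
      show (1 : Matrix (Fin (Nat.choose 0 0)) (Fin (Nat.choose 0 0)) ℂ) p q = _
      rw [hpq, Matrix.one_apply_eq, Matrix.det_fin_zero]
  | succ n ih =>
      intro v p q
      set M : Matrix (Fin (n+1)) (Fin (n+1)) ℂ := Matrix.of fun k l : Fin (n+1) => v (↑k) l
        with hM
      rw [DChain_aug n v n (le_refl _), Matrix.submatrix_apply]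
      rcases hx : ((finCongr (Nat.choose_succ_succ n n :
          (n+1).choose (n+1) = n.choose n + n.choose (n+1))).trans finSumFinEquiv.symm) q
          with q1 | q2
      · rw [Matrix.fromCols_apply_inl]
        calc (∑ s ∈ Finset.range (n+1), ((-1:ℂ)^s * v s 0) •
                DChain n (fun u => v (skipf s u) ∘ Fin.succ) n)
              (Fin.cast ((Nat.choose_zero_right (n+1)).trans (Nat.choose_zero_right n).symm) p)
              q1
            = ∑ s ∈ Finset.range (n+1), ((-1:ℂ)^s * v s 0) •
                DChain n (fun u => v (skipf s u) ∘ Fin.succ) n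
                (Fin.cast ((Nat.choose_zero_right (n+1)).trans (Nat.choose_zero_right n).symm) p)
                q1 := by
              rw [Matrix.sum_apply]
              exact Finset.sum_congr rfl fun s _ => rfl
          _ = ∑ s : Fin (n+1), (-1:ℂ)^(s:ℕ) * M s 0 *
                (M.submatrix s.succAbove Fin.succ).det := by
              rw [← Fin.sum_univ_eq_sum_range (fun s => ((-1:ℂ)^s * v s 0) •
                DChain n (fun u => v (skipf s u) ∘ Fin.succ) n
                (Fin.cast ((Nat.choose_zero_right (n+1)).trans (Nat.choose_zero_right n).symm) p)
                q1) (n+1)]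
              refine Finset.sum_congr rfl fun s _ => ?_
              rw [ih (fun u => v (skipf (↑s) u) ∘ Fin.succ), smul_eq_mul]
              have hsub : (Matrix.of fun k l : Fin n =>
                  ((fun u => v (skipf (↑s) u) ∘ Fin.succ) (↑k)) l) =
                  M.submatrix s.succAbove Fin.succ := by
                ext k l
                simp only [Matrix.of_apply, Matrix.submatrix_apply, Function.comp_apply, hM]
                rw [val_succAbove]
              rw [hsub]
              rfl
          _ = M.det := (Matrix.det_succ_column_zero M).symm
      · have h0 : n.choose (n+1) = 0 := Nat.choose_eq_zero_of_lt (by omega)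
        have h0' : n.choose n.succ = 0 := h0
        exact absurd q2.isLt (by omega)

/-- every entry of the operator determinant of the array `(C k l)` equals
the corresponding entry of the product `G_1(i_1,j_1) ⋯ G_m(i_m,j_m)` of the TT-operator
cores `G_k(i_k, j_k) = D_{k,m}(C k 1 (i k) (j k), …, C k m (i k) (j k))`, a
`C(m,k-1) × C(m,k)` matrix; in particular the operator determinant is a TT-operator whose
`k`-th internal rank is at most the binomial coefficient `C(m,k)`. -/
theorem opDet_eq_tt_operator (m : ℕ) (n : Fin m → ℕ)
    (C : (k : Fin m) → Fin m → Matrix (Fin (n k)) (Fin (n k)) ℂ)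
    (i j : (k : Fin m) → Fin (n k))
    (p : Fin (m.choose 0)) (q : Fin (m.choose m)) :
    opDet m n C i j =
      DChain m
        (fun k l => if h : k < m then C ⟨k, h⟩ l (i ⟨k, h⟩) (j ⟨k, h⟩) else 0) m p q := by
  rw [DChain_det m (fun k l => if h : k < m then C ⟨k, h⟩ l (i ⟨k, h⟩) (j ⟨k, h⟩) else 0) p q]
  rw [← Matrix.det_transpose, Matrix.det_apply']
  simp only [opDet, Matrix.sum_apply, Matrix.smul_apply, Matrix.of_apply,
    Matrix.transpose_apply]
  simp only [zsmul_eq_mul]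
  refine Finset.sum_congr rfl fun σ _ => ?_
  congr 1
  refine Finset.prod_congr rfl fun k _ => ?_
  simp only [k.isLt, dif_pos, Fin.eta]
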